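/- arXiv:1703.02452 — 3 statements merged into one kernel-verified Lean document; each statement's English description precedes it below -/
import Mathlib

section
/- Let G be a finite group with a minimal normal abelian subgroup N and a Sylow p-subgroup P such that G = N·N_G(P). If N ∩ N_G(P) is nontrivial, then N normalizes P, and hence P is normal in G. -/
/-- Let `G` be a finite group with an abelian minimal normal subgroup `N` and a Sylow
`p`-subgroup `P` such that `G = N · N_G(P)`.  If `N ∩ N_G(P)` is nontrivial, then `N`
normalizes `P`, and hence `P` is normal in `G`. -/
theorem minimal_normal_inter_normalizer (p : ℕ) [Fact p.Prime] (G : Type) [Group G]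
    [Finite G] (N : Subgroup G) (hN : N.Normal) (hNbot : N ≠ ⊥)
    (hmin : ∀ K : Subgroup G, K.Normal → K ≤ N → K = ⊥ ∨ K = N)
    (hab : ∀ a ∈ N, ∀ b ∈ N, a * b = b * a)
    (P : Sylow p G) (hgen : N ⊔ Subgroup.normalizer ((P : Subgroup G) : Set G) = ⊤)
    (hnontriv : N ⊓ Subgroup.normalizer ((P : Subgroup G) : Set G) ≠ ⊥) :
    N ≤ Subgroup.normalizer ((P : Subgroup G) : Set G) ∧ (P : Subgroup G).Normal := by
  set K := N ⊓ Subgroup.normalizer ((P : Subgroup G) : Set G) with hK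
  have hNnorm : N ≤ Subgroup.normalizer (K : Set G) := by
    intro n hn
    rw [Subgroup.mem_normalizer_iff]
    intro k
    constructor
    · intro hk
      have : n * k * n⁻¹ = k := by
        rw [hab n hn k hk.1]; group
      rwa [this]
    · intro hk
      have hkN : n * k * n⁻¹ ∈ N := hk.1
      have hkN' : k ∈ N := by
        have := (N.mul_mem_cancel_right (N.inv_mem hn)).mp hkN
        exact (N.mul_mem_cancel_left hn).mp this
      have : n * k * n⁻¹ = k := by
        rw [hab n hn k hkN']; group
      rwa [this] at hk
  have hPnorm : Subgroup.normalizer ((P : Subgroup G) : Set G) ≤ Subgroup.normalizer (K : Set G) := by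
    intro g hg
    rw [Subgroup.mem_normalizer_iff]
    intro k
    constructor
    · intro hk
      exact ⟨hN.conj_mem k hk.1 g,
        Subgroup.mul_mem _ (Subgroup.mul_mem _ hg hk.2) (Subgroup.inv_mem _ hg)⟩
    · intro hk
      have h1 : k ∈ N := by
        have := hN.conj_mem _ hk.1 g⁻¹
        simpa [mul_assoc] using this
      have h2 : k ∈ Subgroup.normalizer ((P : Subgroup G) : Set G) := by
        have := Subgroup.mul_mem _ (Subgroup.mul_mem _ (Subgroup.inv_mem _ hg) hk.2) hg
        simpa [mul_assoc] using this
      exact ⟨h1, h2⟩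
  have hKnormal : K.Normal := by
    rw [← Subgroup.normalizer_eq_top_iff]
    have : N ⊔ Subgroup.normalizer ((P : Subgroup G) : Set G) ≤ Subgroup.normalizer (K : Set G) := sup_le hNnorm hPnorm
    rw [hgen] at this
    exact top_le_iff.mp this
  rcases hmin K hKnormal inf_le_left with h | h
  · exact absurd h hnontriv
  · have h1 : N ≤ Subgroup.normalizer ((P : Subgroup G) : Set G) := by
      rw [← h]; exact inf_le_right
    refine ⟨h1, ?_⟩
    rw [← Subgroup.normalizer_eq_top_iff]
    exact top_le_iff.mp (hgen ▸ sup_le h1 le_rfl)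
end

section
/- Let G be a finite solvable group, p a prime, and suppose that every monomial irreducible ordinary character χ of G has degree χ(1) not divisible by p. Then G has a normal Sylow p-subgroup. -/
/-- The space of the representation of `G` induced from a linear character `lam` of `H`:
functions `f : G → k` with `f (h * g) = lam h * f g`. -/
def IndSpace (k : Type) [Field k] {G : Type} [Group G] (H : Subgroup G) (lam : H →* kˣ) :
    Submodule k (G → k) where
  carrier := {f | ∀ (h : H) (g : G), f ((h : G) * g) = (lam h : k) * f g}
  add_mem' := by
    intro a b ha hb h g
    simp only [Pi.add_apply, ha h g, hb h g, mul_add]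
  zero_mem' := by intro h g; simp
  smul_mem' := by
    intro c f hf h g
    simp only [Pi.smul_apply, smul_eq_mul, hf h g]
    ring

/-- The representation of `G` on `IndSpace k H lam` by right translation; this is the
representation induced from the linear character `lam` of `H`. -/
def indRep (k : Type) [Field k] {G : Type} [Group G] (H : Subgroup G) (lam : H →* kˣ) :
    Representation k G (IndSpace k H lam) where
  toFun x :=
    { toFun := fun f => ⟨fun g => (f : G → k) (g * x), by
        intro h g
        simpa [mul_assoc] using f.2 h (g * x)⟩
      map_add' := by intro a b; ext g; simp
      map_smul' := by intro c f; ext g; simp }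
  map_one' := by ext f g; simp
  map_mul' := by intro x y; ext f g; simp [mul_assoc]



open Representation

section ModuleHelpers

variable {k : Type*} {G : Type*} {V : Type*} [CommRing k] [Group G]
  [AddCommGroup V] [Module k V] (ρ : Representation k G V)

/-- Membership transfer: a `MonoidAlgebra` submodule is closed under the action of `ρ g`. -/
lemma mem_rho_smul {W : Submodule (MonoidAlgebra k G) ρ.asModule} {v : V}
    (hv : ρ.asModuleEquiv.symm v ∈ W) (g : G) :
    ρ.asModuleEquiv.symm (ρ g v) ∈ W := by
  rw [asModuleEquiv_symm_map_rho]
  exact W.smul_mem _ hv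

lemma mem_scalar_smul {W : Submodule (MonoidAlgebra k G) ρ.asModule} {v : V}
    (hv : ρ.asModuleEquiv.symm v ∈ W) (r : k) :
    ρ.asModuleEquiv.symm (r • v) ∈ W := by
  rw [asModuleEquiv_symm_map_smul]
  exact W.smul_mem _ hv

lemma asAlgebraHom_mem (U : Submodule k V) (hU : ∀ (g : G), ∀ v ∈ U, ρ g v ∈ U)
    (r : MonoidAlgebra k G) {v : V} (hv : v ∈ U) : ρ.asAlgebraHom r v ∈ U := by
  induction r using MonoidAlgebra.induction with
  | zero => simpa using U.zero_mem
  | single_add g c r _ _ ih =>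
      rw [map_add]
      refine U.add_mem ?_ ih
      have : ρ.asAlgebraHom (MonoidAlgebra.single g c) v = c • ρ g v := by
        rw [show (MonoidAlgebra.single g c) = (MonoidAlgebra.single g c : MonoidAlgebra k G) from rfl]
        rw [Representation.asAlgebraHom_single]
        rfl
      rw [this]
      exact U.smul_mem _ (hU g v hv)

/-- A `k`-submodule invariant under all `ρ g` yields a `MonoidAlgebra k G`-submodule. -/
def subOfInvariant (U : Submodule k V) (hU : ∀ (g : G), ∀ v ∈ U, ρ g v ∈ U) :
    Submodule (MonoidAlgebra k G) ρ.asModule where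
  carrier := {m : ρ.asModule | ρ.asModuleEquiv m ∈ U}
  add_mem' := by intro a b ha hb; show ρ.asModuleEquiv (a + b) ∈ U; rw [map_add]; exact U.add_mem ha hb
  zero_mem' := by simpa using U.zero_mem
  smul_mem' := by
    intro r m hm
    simp only [Set.mem_setOf_eq, asModuleEquiv_map_smul]
    exact asAlgebraHom_mem ρ U hU r hm

@[simp] lemma mem_subOfInvariant {U : Submodule k V} {hU} {m : ρ.asModule} :
    m ∈ subOfInvariant ρ U hU ↔ ρ.asModuleEquiv m ∈ U := Iff.rfl

end ModuleHelpers

section Transfer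

variable {k : Type*} [Field k] {G₁ G₂ : Type*} [Group G₁] [Group G₂]
  {V₁ V₂ : Type*} [AddCommGroup V₁] [Module k V₁] [AddCommGroup V₂] [Module k V₂]

/-- Simplicity transfers along a surjection of groups and a compatible linear equivalence. -/
lemma isSimpleModule_of_surjective (φ : G₁ →* G₂) (hφ : Function.Surjective φ)
    (ρ₁ : Representation k G₁ V₁) (ρ₂ : Representation k G₂ V₂)
    (e : V₁ ≃ₗ[k] V₂) (he : ∀ (x : G₁) (v : V₁), e (ρ₁ x v) = ρ₂ (φ x) (e v))
    (h : IsSimpleModule (MonoidAlgebra k G₂) ρ₂.asModule) :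
    IsSimpleModule (MonoidAlgebra k G₁) ρ₁.asModule := by
  have hnt₂ : Nontrivial V₂ := by
    rcases h.toIsSimpleOrder.toNontrivial.exists_pair_ne with ⟨a, b, hab⟩
    by_contra hsub
    rw [not_nontrivial_iff_subsingleton] at hsub
    exact hab (by
      apply SetLike.ext
      intro m
      have : (ρ₂.asModuleEquiv m : V₂) = ρ₂.asModuleEquiv (0 : ρ₂.asModule) := Subsingleton.elim _ _
      have hm : m = 0 := ρ₂.asModuleEquiv.injective this
      simp [hm])
  have hnt₁ : Nontrivial V₁ := e.toEquiv.nontrivial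
  haveI hntsub : Nontrivial (Submodule (MonoidAlgebra k G₁) ρ₁.asModule) := by
    refine ⟨⊥, ⊤, fun hbt => ?_⟩
    obtain ⟨v, hv⟩ := exists_ne (0 : V₁)
    have : (ρ₁.asModuleEquiv.symm v) ∈ (⊥ : Submodule (MonoidAlgebra k G₁) ρ₁.asModule) := by
      rw [hbt]; trivial
    rw [Submodule.mem_bot] at this
    exact hv (by simpa using congrArg ρ₁.asModuleEquiv this)
  refine { toIsSimpleOrder := ⟨fun W => ?_⟩ }
  -- build U₂
  set S₂ : Set V₂ := e '' (ρ₁.asModuleEquiv '' (W : Set ρ₁.asModule)) with hS₂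
  have hmemS₂ : ∀ v₂ : V₂, v₂ ∈ S₂ ↔ ρ₁.asModuleEquiv.symm (e.symm v₂) ∈ W := by
    intro v₂
    constructor
    · rintro ⟨v₁, ⟨m, hm, rfl⟩, rfl⟩
      simpa using hm
    · intro hm
      exact ⟨e.symm v₂, ⟨_, hm, by simp⟩, by simp⟩
  have hU₂sub : ∃ U₂ : Submodule k V₂, (U₂ : Set V₂) = S₂ := by
    refine ⟨{ carrier := S₂, add_mem' := ?_, zero_mem' := ?_, smul_mem' := ?_ }, rfl⟩
    · intro a b ha hb
      rw [hmemS₂] at *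
      simpa using W.add_mem ha hb
    · rw [hmemS₂]; simpa using W.zero_mem
    · intro c x hx
      rw [hmemS₂] at *
      rw [map_smul, asModuleEquiv_symm_map_smul]
      exact W.smul_mem _ hx
  obtain ⟨U₂, hU₂⟩ := hU₂sub
  have hU₂mem : ∀ v₂ : V₂, v₂ ∈ U₂ ↔ ρ₁.asModuleEquiv.symm (e.symm v₂) ∈ W := by
    intro v₂; rw [← hmemS₂, ← hU₂]; rfl
  have hinv : ∀ (g : G₂), ∀ v ∈ U₂, ρ₂ g v ∈ U₂ := by
    intro g v hv
    obtain ⟨x, rfl⟩ := hφ g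
    rw [hU₂mem] at *
    have : e.symm (ρ₂ (φ x) v) = ρ₁ x (e.symm v) := by
      apply e.injective
      rw [he]
      simp
    rw [this]
    exact mem_rho_smul ρ₁ hv x
  have := h.toIsSimpleOrder.eq_bot_or_eq_top (subOfInvariant ρ₂ U₂ hinv)
  rcases this with hb | ht
  · left
    apply (Submodule.eq_bot_iff _).2
    intro m hm
    have : ρ₁.asModuleEquiv.symm (e.symm (e (ρ₁.asModuleEquiv m))) ∈ W := by simpa using hm
    have h2 : (ρ₂.asModuleEquiv.symm (e (ρ₁.asModuleEquiv m))) ∈ subOfInvariant ρ₂ U₂ hinv := by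
      rw [mem_subOfInvariant]
      simpa [hU₂mem] using this
    rw [hb, Submodule.mem_bot] at h2
    have : e (ρ₁.asModuleEquiv m) = 0 := by simpa using congrArg ρ₂.asModuleEquiv h2
    have : ρ₁.asModuleEquiv m = 0 := by simpa using this
    simpa using congrArg ρ₁.asModuleEquiv.symm this
  · right
    rw [Submodule.eq_top_iff']
    intro m
    have h2 : (ρ₂.asModuleEquiv.symm (e (ρ₁.asModuleEquiv m))) ∈ subOfInvariant ρ₂ U₂ hinv := by
      rw [ht]; trivial
    rw [mem_subOfInvariant] at h2
    rw [hU₂mem] at h2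
    simpa using h2

/-- Variant with the equivalence in the other direction. -/
lemma isSimpleModule_of_surjective' (φ : G₁ →* G₂) (hφ : Function.Surjective φ)
    (ρ₁ : Representation k G₁ V₁) (ρ₂ : Representation k G₂ V₂)
    (e : V₂ ≃ₗ[k] V₁) (he : ∀ (x : G₁) (v : V₂), e (ρ₂ (φ x) v) = ρ₁ x (e v))
    (h : IsSimpleModule (MonoidAlgebra k G₂) ρ₂.asModule) :
    IsSimpleModule (MonoidAlgebra k G₁) ρ₁.asModule := by
  refine isSimpleModule_of_surjective φ hφ ρ₁ ρ₂ e.symm (fun x v => ?_) h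
  apply e.injective
  rw [LinearEquiv.apply_symm_apply, he, LinearEquiv.apply_symm_apply]

end Transfer

noncomputable section FinrankInd

variable {G : Type} [Group G] (H : Subgroup G) (lam : H →* ℂˣ)

lemma mem_right_coset_out (g : G) :
    g * ((⟦g⟧ : Quotient (QuotientGroup.rightRel H)).out)⁻¹ ∈ H := by
  have h := Quotient.mk_out (s := QuotientGroup.rightRel H) g
  rw [QuotientGroup.rightRel_apply] at h
  exact h

/-- `IndSpace` is linearly equivalent to functions on the right coset space. -/
def indSpaceEquiv : (IndSpace ℂ H lam) ≃ₗ[ℂ] (Quotient (QuotientGroup.rightRel H) → ℂ) where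
  toFun f := fun q => (f : G → ℂ) q.out
  map_add' f g := by ext q; rfl
  map_smul' c f := by ext q; rfl
  invFun c := ⟨fun g =>
      (lam ⟨g * ((⟦g⟧ : Quotient (QuotientGroup.rightRel H)).out)⁻¹,
        mem_right_coset_out H g⟩ : ℂ) * c ⟦g⟧, by
    intro h g
    have hq : (⟦(h : G) * g⟧ : Quotient (QuotientGroup.rightRel H)) = ⟦g⟧ :=
      Quotient.sound (show (QuotientGroup.rightRel H) _ _ from
        QuotientGroup.rightRel_apply.mpr (by simpa using h.2))
    simp only [hq]
    have key : (⟨(h : G) * g * ((⟦g⟧ : Quotient (QuotientGroup.rightRel H)).out)⁻¹,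
          by rw [mul_assoc]; exact H.mul_mem h.2 (mem_right_coset_out H g)⟩ : H)
        = h * ⟨g * ((⟦g⟧ : Quotient (QuotientGroup.rightRel H)).out)⁻¹,
          mem_right_coset_out H g⟩ := by
      ext; simp [mul_assoc]
    rw [key, map_mul]
    push_cast
    ring⟩
  left_inv f := by
    ext g
    have key := f.2 ⟨g * ((⟦g⟧ : Quotient (QuotientGroup.rightRel H)).out)⁻¹,
        mem_right_coset_out H g⟩ ((⟦g⟧ : Quotient (QuotientGroup.rightRel H)).out)
    simp only [inv_mul_cancel_right] at key
    exact key.symm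
  right_inv c := by
    ext q
    simp only
    have hq : (⟦(q.out : G)⟧ : Quotient (QuotientGroup.rightRel H)) = q := Quotient.out_eq q
    simp only [hq]
    have h1 : ∀ (pf : (1:G) ∈ H), (⟨(1:G), pf⟩ : H) = 1 := fun _ => rfl
    have h2 : ∀ (pf : q.out * q.out⁻¹ ∈ H), (⟨q.out * q.out⁻¹, pf⟩ : H) = 1 := fun _ => by
      ext; simp
    rw [h2, map_one]
    simp

lemma finrank_indSpace [Finite G] : Module.finrank ℂ (IndSpace ℂ H lam) = H.index := by
  haveI : Fintype G := Fintype.ofFinite G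
  haveI : Fintype (G ⧸ H) := Fintype.ofFinite _
  rw [(indSpaceEquiv H lam).finrank_eq, Module.finrank_pi,
    QuotientGroup.card_quotient_rightRel]
  rw [Subgroup.index, Nat.card_eq_fintype_card]

end FinrankInd

section Orthogonality

lemma sum_char_eq_zero {A : Type*} [Group A] [Fintype A] (χ : A →* ℂˣ)
    (hχ : ∃ a, χ a ≠ 1) : ∑ a : A, ((χ a : ℂˣ) : ℂ) = 0 := by
  obtain ⟨b, hb⟩ := hχ
  have hsum : ((χ b : ℂˣ) : ℂ) * ∑ a : A, ((χ a : ℂˣ) : ℂ) = ∑ a : A, ((χ a : ℂˣ) : ℂ) := by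
    rw [Finset.mul_sum]
    rw [← Equiv.sum_comp (Equiv.mulLeft b) (fun a => ((χ a : ℂˣ) : ℂ))]
    apply Finset.sum_congr rfl
    intro a _
    simp [map_mul]
  have hb' : ((χ b : ℂˣ) : ℂ) ≠ 1 := by
    intro h
    exact hb (Units.ext (by simpa using h))
  have h0 : (((χ b : ℂˣ) : ℂ) - 1) * ∑ a : A, ((χ a : ℂˣ) : ℂ) = 0 := by
    rw [sub_mul, one_mul, hsum, sub_self]
  rcases mul_eq_zero.mp h0 with h | h
  · exact absurd (sub_eq_zero.mp h) hb'
  · exact h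

end Orthogonality

section SimpleInd

variable {G : Type} [Group G] [Finite G] (N : Subgroup G) [N.Normal] (ν : ↥N →* ℂˣ)

/-- The conjugate character `n ↦ ν (a n a⁻¹)`. -/
def cha (a : G) : ↥N →* ℂˣ := ν.comp (MulAut.conjNormal a).toMonoidHom

lemma cha_apply (a : G) (n : ↥N) : cha N ν a n = ν (MulAut.conjNormal a n) := rfl

lemma cha_mul (a b : G) (n : ↥N) :
    cha N ν (a * b) n = cha N ν a ((MulAut.conjNormal b) n) := by
  simp [cha_apply, map_mul, MulAut.mul_apply]

lemma cha_one (n : ↥N) : cha N ν 1 n = ν n := by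
  simp [cha_apply]

variable (T : Subgroup G) (lam : ↥T →* ℂˣ) (hNT : N ≤ T)
  (hres : ∀ n : ↥N, lam ⟨(n : G), hNT n.2⟩ = ν n)
  (hstab : ∀ g : G, g ∈ T ↔ ∀ n : ↥N, ν (MulAut.conjNormal g n) = ν n)

include hNT hres in
lemma ind_val_mul_right (f : IndSpace ℂ T lam) (x : G) (n : ↥N) :
    (f : G → ℂ) (x * n) = ((cha N ν x n : ℂˣ) : ℂ) * (f : G → ℂ) x := by
  have hmem : (MulAut.conjNormal x n : G) ∈ T := hNT (MulAut.conjNormal x n).2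
  have hx : x * n = ((MulAut.conjNormal x n : G)) * x := by
    rw [MulAut.conjNormal_apply]
    group
  rw [hx]
  have := f.2 ⟨(MulAut.conjNormal x n : G), hmem⟩ x
  rw [this, cha_apply, ← hres ((MulAut.conjNormal x) n)]

include hstab in
lemma cha_eq_iff (a x : G) :
    (∀ n : ↥N, cha N ν a n = cha N ν x n) ↔ x * a⁻¹ ∈ T := by
  constructor
  · intro h
    rw [hstab]
    intro m
    have h1 : (MulAut.conjNormal a) ((MulAut.conjNormal a⁻¹) m) = m := by
      rw [← MulAut.mul_apply, ← map_mul]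
      simp
    have h2 : (MulAut.conjNormal (x * a⁻¹)) m
        = (MulAut.conjNormal x) ((MulAut.conjNormal a⁻¹) m) := by
      rw [map_mul, MulAut.mul_apply]
    rw [h2]
    have := (h ((MulAut.conjNormal a⁻¹) m)).symm
    rw [cha_apply, cha_apply, h1] at this
    rw [this]
  · intro ht n
    have key := (hstab _).1 ht ((MulAut.conjNormal a) n)
    have h2 : (MulAut.conjNormal (x * a⁻¹)) ((MulAut.conjNormal a) n)
        = (MulAut.conjNormal x) n := by
      rw [← MulAut.mul_apply, ← map_mul]
      simp
    rw [h2] at key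
    rw [cha_apply, cha_apply, ← key]

end SimpleInd

section SimpleMain

open Representation

variable {G : Type} [Group G] [Finite G] (N : Subgroup G) [N.Normal] (ν : ↥N →* ℂˣ)
variable (T : Subgroup G) (lam : ↥T →* ℂˣ)

open scoped Classical in
/-- The canonical nonzero element of `IndSpace`: `lam` on `T`, `0` elsewhere. -/
noncomputable def indDelta : IndSpace ℂ T lam := ⟨fun g =>
    if h : g ∈ T then ((lam ⟨g, h⟩ : ℂˣ) : ℂ) else 0, by
  intro h g
  by_cases hg : g ∈ T
  · have hhg : (h : G) * g ∈ T := T.mul_mem h.2 hg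
    simp only [dif_pos hg, dif_pos hhg]
    rw [show (⟨(h:G)*g, hhg⟩ : ↥T) = h * ⟨g, hg⟩ from rfl, map_mul]
    push_cast
    ring
  · have hhg : ¬ ((h : G) * g ∈ T) := by
      intro hc
      exact hg (by simpa [inv_mul_cancel_left] using T.mul_mem (T.inv_mem h.2) hc)
    simp only [dif_neg hg, dif_neg hhg, mul_zero]⟩

lemma indDelta_ne_zero : indDelta T lam ≠ 0 := by
  intro h
  have h1 : ((indDelta T lam : IndSpace ℂ T lam) : G → ℂ) 1 = 0 := by rw [h]; rfl
  have h2 : ((indDelta T lam : IndSpace ℂ T lam) : G → ℂ) 1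
      = ((lam ⟨(1:G), T.one_mem⟩ : ℂˣ) : ℂ) := by
    simp only [indDelta]
    exact dif_pos T.one_mem
  rw [h2, show (⟨(1:G), T.one_mem⟩ : ↥T) = 1 from rfl, map_one] at h1
  simp at h1

lemma indRep_coe_apply (x : G) (f : IndSpace ℂ T lam) (g : G) :
    ((indRep ℂ T lam x f : IndSpace ℂ T lam) : G → ℂ) g = (f : G → ℂ) (g * x) := rfl

variable (hNT : N ≤ T)
  (hres : ∀ n : ↥N, lam ⟨(n : G), hNT n.2⟩ = ν n)
  (hstab : ∀ g : G, g ∈ T ↔ ∀ n : ↥N, ν (MulAut.conjNormal g n) = ν n)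

include hNT hres hstab in
lemma isSimpleModule_indRep_of_stab :
    IsSimpleModule (MonoidAlgebra ℂ G) (indRep ℂ T lam).asModule := by
  classical
  haveI : Fintype ↥N := Fintype.ofFinite _
  have hcard0 : (Fintype.card ↥N : ℂ) ≠ 0 := Nat.cast_ne_zero.mpr Fintype.card_pos.ne'
  -- the averaging operator
  set avg : G → IndSpace ℂ T lam → IndSpace ℂ T lam := fun a f =>
    ∑ n : ↥N, ((((cha N ν a n)⁻¹ : ℂˣ) : ℂ)) • ((indRep ℂ T lam) (n : G) f) with havgdef
  have avg_val : ∀ (a : G) (f : IndSpace ℂ T lam) (x : G),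
      ((avg a f : IndSpace ℂ T lam) : G → ℂ) x
        = (if x * a⁻¹ ∈ T then (Fintype.card ↥N : ℂ) else 0) * (f : G → ℂ) x := by
    intro a f x
    have hcoe : ((avg a f : IndSpace ℂ T lam) : G → ℂ) x
        = ∑ n : ↥N, (((cha N ν a n)⁻¹ : ℂˣ) : ℂ) * ((f : G → ℂ) (x * n)) := by
      rw [havgdef]
      simp only [AddSubmonoidClass.coe_finset_sum, Finset.sum_apply, Submodule.coe_smul,
        Pi.smul_apply, smul_eq_mul]
      apply Finset.sum_congr rfl
      intro n _
      rw [indRep_coe_apply]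
    rw [hcoe]
    have hterm : ∀ n : ↥N, (((cha N ν a n)⁻¹ : ℂˣ) : ℂ) * ((f : G → ℂ) (x * n))
        = ((((cha N ν a)⁻¹ * cha N ν x : ↥N →* ℂˣ) n : ℂˣ) : ℂ) * (f : G → ℂ) x := by
      intro n
      rw [ind_val_mul_right N ν T lam hNT hres f x n]
      simp only [MonoidHom.mul_apply, MonoidHom.inv_apply, Units.val_mul]
      ring
    rw [Finset.sum_congr rfl (fun n _ => hterm n), ← Finset.sum_mul]
    congr 1
    by_cases ht : x * a⁻¹ ∈ T
    · rw [if_pos ht]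
      have hc : ∀ n : ↥N, ((cha N ν a)⁻¹ * cha N ν x : ↥N →* ℂˣ) n = 1 := by
        intro n
        have := ((cha_eq_iff N ν T hstab a x).2 ht) n
        simp only [MonoidHom.mul_apply, MonoidHom.inv_apply]
        rw [this]
        simp
      rw [Finset.sum_congr rfl (fun n _ => by rw [hc n, Units.val_one])]
      simp
    · rw [if_neg ht]
      apply sum_char_eq_zero
      have := (not_iff_not.2 (cha_eq_iff N ν T hstab a x)).2 ht
      push_neg at this
      obtain ⟨n, hn⟩ := this
      refine ⟨n, fun hc => hn ?_⟩
      simp only [MonoidHom.mul_apply, MonoidHom.inv_apply] at hc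
      have := congrArg (fun u => (cha N ν a n) * u) hc
      simpa [mul_comm] using this.symm
  -- lattice nontriviality
  haveI hnt : Nontrivial (Submodule (MonoidAlgebra ℂ G) (indRep ℂ T lam).asModule) := by
    refine ⟨⊥, ⊤, fun hbt => ?_⟩
    have h0 : ((indRep ℂ T lam).asModuleEquiv.symm (indDelta T lam)) ∈ (⊥ : Submodule (MonoidAlgebra ℂ G) (indRep ℂ T lam).asModule) := by
      rw [hbt]; trivial
    rw [Submodule.mem_bot] at h0
    exact indDelta_ne_zero T lam (by simpa using congrArg (indRep ℂ T lam).asModuleEquiv h0)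
  refine { toIsSimpleOrder := ⟨fun W => ?_⟩ }
  by_cases hW : W = ⊥
  · left; exact hW
  right
  obtain ⟨m, hm, hm0⟩ := (Submodule.ne_bot_iff W).mp hW
  set f : IndSpace ℂ T lam := (indRep ℂ T lam).asModuleEquiv m with hfdef
  have hfW : (indRep ℂ T lam).asModuleEquiv.symm f ∈ W := by
    rw [hfdef]
    simpa using hm
  have hf0 : f ≠ 0 := by
    intro h
    apply hm0
    rw [hfdef] at h
    have := congrArg (indRep ℂ T lam).asModuleEquiv.symm h
    simpa using this
  obtain ⟨a, ha⟩ : ∃ a : G, (f : G → ℂ) a ≠ 0 := by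
    by_contra hc
    push_neg at hc
    exact hf0 (Subtype.ext (funext fun x => hc x))
  have havgW : ∀ (b : G) (g : IndSpace ℂ T lam), (indRep ℂ T lam).asModuleEquiv.symm g ∈ W →
      (indRep ℂ T lam).asModuleEquiv.symm (avg b g) ∈ W := by
    intro b g hg
    rw [havgdef]
    simp only
    rw [map_sum]
    apply Submodule.sum_mem
    intro n _
    exact mem_scalar_smul (indRep ℂ T lam) (mem_rho_smul (indRep ℂ T lam) hg _) _
  set g : IndSpace ℂ T lam := avg a f with hgdef
  have hgW : (indRep ℂ T lam).asModuleEquiv.symm g ∈ W := havgW a f hfW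
  set E : G → IndSpace ℂ T lam := fun b => (indRep ℂ T lam) (b⁻¹ * a) g with hEdef
  have hEW : ∀ b, (indRep ℂ T lam).asModuleEquiv.symm (E b) ∈ W := fun b => mem_rho_smul (indRep ℂ T lam) hgW _
  have hEval : ∀ b x : G, ((E b : IndSpace ℂ T lam) : G → ℂ) x
      = (if x * b⁻¹ ∈ T then (Fintype.card ↥N : ℂ) else 0) * (f : G → ℂ) (x * (b⁻¹ * a)) := by
    intro b x
    rw [hEdef]
    simp only
    rw [indRep_coe_apply, hgdef, avg_val a f (x * (b⁻¹ * a))]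
    have hxy : x * (b⁻¹ * a) * a⁻¹ = x * b⁻¹ := by group
    rw [hxy]
  -- spanning
  have hspan : ∀ v : IndSpace ℂ T lam, (indRep ℂ T lam).asModuleEquiv.symm v ∈ W := by
    intro v
    haveI : Fintype (Quotient (QuotientGroup.rightRel T)) := Fintype.ofFinite _
    set c : Quotient (QuotientGroup.rightRel T) → ℂ :=
      fun q => (v : G → ℂ) q.out / ((Fintype.card ↥N : ℂ) * (f : G → ℂ) a) with hcdef
    have hv : v = ∑ q : Quotient (QuotientGroup.rightRel T), c q • E q.out := by
      apply Subtype.ext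
      apply funext
      intro x
      rw [show (((∑ q : Quotient (QuotientGroup.rightRel T), c q • E q.out : IndSpace ℂ T lam)) : G → ℂ) x
          = ∑ q : Quotient (QuotientGroup.rightRel T), c q * ((E q.out : IndSpace ℂ T lam) : G → ℂ) x by
        simp only [AddSubmonoidClass.coe_finset_sum, Finset.sum_apply, Submodule.coe_smul,
          Pi.smul_apply, smul_eq_mul]]
      rw [Finset.sum_eq_single (⟦x⟧ : Quotient (QuotientGroup.rightRel T))]
      · -- main term
        have ht : x * ((⟦x⟧ : Quotient (QuotientGroup.rightRel T)).out)⁻¹ ∈ T :=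
          mem_right_coset_out T x
        set b := (⟦x⟧ : Quotient (QuotientGroup.rightRel T)).out with hbdef
        rw [hEval, if_pos ht]
        have hfb : (f : G → ℂ) (x * (b⁻¹ * a)) = ((lam ⟨x * b⁻¹, ht⟩ : ℂˣ) : ℂ) * (f : G → ℂ) a := by
          rw [show x * (b⁻¹ * a) = (x * b⁻¹) * a by group]
          exact f.2 ⟨x * b⁻¹, ht⟩ a
        have hvx : (v : G → ℂ) x = ((lam ⟨x * b⁻¹, ht⟩ : ℂˣ) : ℂ) * (v : G → ℂ) b := by
          have := v.2 ⟨x * b⁻¹, ht⟩ b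
          simpa [inv_mul_cancel_right] using this
        rw [hfb, hvx, hcdef]
        have hfa0 : (f : G → ℂ) a ≠ 0 := ha
        field_simp
        ring
      · intro q _ hq
        have hqt : ¬ (x * (q.out)⁻¹ ∈ T) := by
          intro hc
          apply hq
          have : (⟦q.out⟧ : Quotient (QuotientGroup.rightRel T)) = ⟦x⟧ := by
            apply Quotient.sound
            exact (show (QuotientGroup.rightRel T) q.out x from
              QuotientGroup.rightRel_apply.mpr hc)
          rw [Quotient.out_eq] at this
          exact this
        rw [hEval, if_neg hqt, zero_mul, mul_zero]
      · intro h
        exact absurd (Finset.mem_univ _) h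
    rw [hv, map_sum]
    exact Submodule.sum_mem _ (fun q _ => mem_scalar_smul (indRep ℂ T lam) (hEW q.out) _)
  rw [Submodule.eq_top_iff']
  intro m'
  have := hspan ((indRep ℂ T lam).asModuleEquiv m')
  simpa using this

end SimpleMain

section QuotTransfer

variable {G : Type} [Group G] (N : Subgroup G) [N.Normal]

/-- The restriction of the quotient map to the preimage of a subgroup of the quotient. -/
def resQuot (Hb : Subgroup (G ⧸ N)) :
    ↥(Subgroup.comap (QuotientGroup.mk' N) Hb) →* ↥Hb where
  toFun h := ⟨QuotientGroup.mk' N h, h.2⟩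
  map_one' := by ext; simp
  map_mul' a b := by ext; simp

variable (Hb : Subgroup (G ⧸ N)) (lamb : ↥Hb →* ℂˣ)

/-- Pullback of an induced space along the quotient map. -/
noncomputable def quotPull : (IndSpace ℂ Hb lamb) →ₗ[ℂ] (IndSpace ℂ (Subgroup.comap (QuotientGroup.mk' N) Hb)
    (lamb.comp (resQuot N Hb))) where
  toFun f := ⟨fun g => (f : (G ⧸ N) → ℂ) (QuotientGroup.mk' N g), by
    intro h g
    have h2 := f.2 ⟨QuotientGroup.mk' N h, h.2⟩ (QuotientGroup.mk' N g)
    simp only [map_mul]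
    rw [h2]
    rfl⟩
  map_add' f g := rfl
  map_smul' c f := rfl

lemma quotPull_bijective : Function.Bijective (quotPull N Hb lamb) := by
  constructor
  · intro f g hfg
    apply Subtype.ext
    funext q
    obtain ⟨x, rfl⟩ := QuotientGroup.mk'_surjective N q
    exact congrFun (congrArg Subtype.val hfg) x
  · intro f
    -- f is constant on fibers of mk'
    have hNH : N ≤ Subgroup.comap (QuotientGroup.mk' N) Hb := by
      intro n hn
      simp only [Subgroup.mem_comap]
      have : QuotientGroup.mk' N n = 1 := by
        rw [← MonoidHom.mem_ker, QuotientGroup.ker_mk']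
        exact hn
      rw [this]
      exact Hb.one_mem
    have hconst : ∀ (n : G) (hn : n ∈ N) (g : G), (f : G → ℂ) (n * g) = (f : G → ℂ) g := by
      intro n hn g
      have h2 := f.2 ⟨n, hNH hn⟩ g
      have h3 : (lamb.comp (resQuot N Hb)) ⟨n, hNH hn⟩ = 1 := by
        have : resQuot N Hb ⟨n, hNH hn⟩ = 1 := by
          ext
          simp only [resQuot, MonoidHom.coe_mk, OneHom.coe_mk]
          rw [show ((1 : ↥Hb) : G ⧸ N) = 1 from rfl, ← MonoidHom.mem_ker, QuotientGroup.ker_mk']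
          exact hn
        rw [MonoidHom.comp_apply, this, map_one]
      rw [h2, h3]
      simp
    have hfiber : ∀ (x y : G), QuotientGroup.mk' N x = QuotientGroup.mk' N y →
        (f : G → ℂ) x = (f : G → ℂ) y := by
      intro x y hxy
      have : x⁻¹ * y ∈ N := by
        rw [← QuotientGroup.eq]
        exact hxy
      have h4 : y = (y * x⁻¹) * x := by group
      have h5 : y * x⁻¹ ∈ N := by
        have h7 := ‹N.Normal›.conj_mem _ this x
        rwa [show x * (x⁻¹ * y) * x⁻¹ = y * x⁻¹ by group] at h7
      rw [h4, hconst _ h5]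
    refine ⟨⟨fun q => (f : G → ℂ) q.out, ?_⟩, ?_⟩
    · intro h q
      obtain ⟨a, hmk⟩ := QuotientGroup.mk'_surjective N (h : G ⧸ N)
      have ha : a ∈ Subgroup.comap (QuotientGroup.mk' N) Hb := by
        rw [Subgroup.mem_comap, hmk]
        exact h.2
      have hout : QuotientGroup.mk' N (((h : G ⧸ N) * q).out) = QuotientGroup.mk' N (a * q.out) := by
        have h1 : QuotientGroup.mk' N (((h : G ⧸ N) * q).out) = (h : G ⧸ N) * q :=
          QuotientGroup.out_eq' _
        have h2 : QuotientGroup.mk' N q.out = q := QuotientGroup.out_eq' _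
        rw [h1, map_mul, h2, hmk]
      show (f : G → ℂ) (((h : G ⧸ N) * q).out) = (lamb h : ℂ) * (f : G → ℂ) q.out
      rw [hfiber _ _ hout]
      have h6 := f.2 ⟨a, ha⟩ q.out
      rw [h6]
      congr 1
      have : resQuot N Hb ⟨a, ha⟩ = h := by
        ext
        simpa [resQuot] using hmk
      rw [show (lamb h : ℂ) = (lamb (resQuot N Hb ⟨a, ha⟩) : ℂ) by rw [this]]
      rfl
    · apply Subtype.ext
      funext g
      have : QuotientGroup.mk' N ((QuotientGroup.mk' N g).out) = QuotientGroup.mk' N g :=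
        QuotientGroup.out_eq' _
      show (f : G → ℂ) ((QuotientGroup.mk' N g).out) = (f : G → ℂ) g
      exact hfiber _ _ this

lemma quotPull_equivariant (x : G) (f : IndSpace ℂ Hb lamb) :
    quotPull N Hb lamb (indRep ℂ Hb lamb (QuotientGroup.mk' N x) f)
      = indRep ℂ (Subgroup.comap (QuotientGroup.mk' N) Hb) (lamb.comp (resQuot N Hb)) x
          (quotPull N Hb lamb f) := by
  apply Subtype.ext
  funext g
  show (f : (G ⧸ N) → ℂ) (QuotientGroup.mk' N g * QuotientGroup.mk' N x)
    = (f : (G ⧸ N) → ℂ) (QuotientGroup.mk' N (g * x))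
  rw [map_mul]

/-- Transfer of the degree hypothesis to quotient groups. -/
lemma hmono_quotient [Finite G] (p : ℕ)
    (hmono : ∀ (H : Subgroup G) (lam : ↥H →* ℂˣ),
      IsSimpleModule (MonoidAlgebra ℂ G) (indRep ℂ H lam).asModule →
        ¬ (p ∣ Module.finrank ℂ (IndSpace ℂ H lam)))
    (Hb : Subgroup (G ⧸ N)) (lamb : ↥Hb →* ℂˣ)
    (hs : IsSimpleModule (MonoidAlgebra ℂ (G ⧸ N)) (indRep ℂ Hb lamb).asModule) :
    ¬ (p ∣ Module.finrank ℂ (IndSpace ℂ Hb lamb)) := by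
  set H := Subgroup.comap (QuotientGroup.mk' N) Hb with hHdef
  set lam := lamb.comp (resQuot N Hb) with hlamdef
  set e0 : (IndSpace ℂ Hb lamb) ≃ₗ[ℂ] (IndSpace ℂ H lam) :=
    LinearEquiv.ofBijective _ (quotPull_bijective N Hb lamb) with he0def
  have he : ∀ (x : G) (v : IndSpace ℂ Hb lamb),
      e0 (indRep ℂ Hb lamb (QuotientGroup.mk' N x) v) = indRep ℂ H lam x (e0 v) := by
    intro x v
    exact quotPull_equivariant N Hb lamb x v
  have hsimple := isSimpleModule_of_surjective' (QuotientGroup.mk' N)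
    (QuotientGroup.mk'_surjective N) (indRep ℂ H lam) (indRep ℂ Hb lamb) e0 he hs
  intro hdvd
  rw [e0.finrank_eq] at hdvd
  exact hmono H lam hsimple hdvd

end QuotTransfer

section GroupHelpers

variable {G : Type} [Group G]

/-- Existence of a minimal nontrivial normal subgroup in a nontrivial finite group. -/
lemma exists_minimal_normal [Finite G] [Nontrivial G] :
    ∃ N : Subgroup G, N.Normal ∧ N ≠ ⊥ ∧
      ∀ K : Subgroup G, K.Normal → K ≠ ⊥ → K ≤ N → K = N := by
  have hS : ({K : Subgroup G | K.Normal ∧ K ≠ ⊥}).Finite := Set.toFinite _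
  have hne : ({K : Subgroup G | K.Normal ∧ K ≠ ⊥}).Nonempty := by
    refine ⟨⊤, inferInstance, ?_⟩
    obtain ⟨a, ha⟩ := exists_ne (1 : G)
    intro h
    have : a ∈ (⊥ : Subgroup G) := h ▸ Subgroup.mem_top a
    exact ha (Subgroup.mem_bot.mp this)
  obtain ⟨N, hNS, hmin⟩ := exists_minimalFor_of_wellFoundedLT
    (fun K : Subgroup G => K.Normal ∧ K ≠ ⊥) (fun K : Subgroup G => Nat.card ↥K) hne
  refine ⟨N, hNS.1, hNS.2, fun K hK hKbot hKN => ?_⟩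
  have hcard := Subgroup.card_le_of_le hKN
  have := hmin ⟨hK, hKbot⟩ hcard
  exact Subgroup.eq_of_le_of_card_ge hKN this

lemma map_subtype_top (H : Subgroup G) : Subgroup.map H.subtype ⊤ = H := by
  ext y
  simp [Subgroup.mem_map]

/-- A minimal normal subgroup of a solvable group is commutative. -/
lemma minimal_normal_comm [Finite G] [Group.IsSolvable G] (N : Subgroup G) (hN : N.Normal)
    (hbot : N ≠ ⊥) (hmin : ∀ K : Subgroup G, K.Normal → K ≠ ⊥ → K ≤ N → K = N) :
    ∀ a b : G, a ∈ N → b ∈ N → a * b = b * a := by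
  haveI := hN
  have hle : ⁅N, N⁆ ≤ N := Subgroup.commutator_le_right N N
  haveI hnorm : (⁅N, N⁆ : Subgroup G).Normal := Subgroup.commutator_normal N N
  by_cases hcomm : (⁅N, N⁆ : Subgroup G) = ⊥
  · have hcen := Subgroup.commutator_eq_bot_iff_le_centralizer.mp hcomm
    intro a b ha hb
    exact (Subgroup.mem_centralizer_iff.mp (hcen ha) b hb).symm
  · exfalso
    have heq : (⁅N, N⁆ : Subgroup G) = N := hmin _ hnorm hcomm hle
    -- transfer to ↥N
    have hmap : Subgroup.map N.subtype ⁅(⊤ : Subgroup ↥N), (⊤ : Subgroup ↥N)⁆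
        = (⁅N, N⁆ : Subgroup G) := by
      rw [Subgroup.map_commutator, map_subtype_top]
    have htop : (⁅(⊤ : Subgroup ↥N), (⊤ : Subgroup ↥N)⁆ : Subgroup ↥N) = ⊤ := by
      apply Subgroup.map_injective (N.subtype_injective)
      rw [hmap, heq, map_subtype_top]
    -- derived series of ↥N is constant ⊤
    have hder : ∀ n, derivedSeries ↥N n = ⊤ := by
      intro n
      induction n with
      | zero => exact derivedSeries_zero ↥N
      | succ n ihn => rw [derivedSeries_succ, ihn, htop]
    obtain ⟨n, hn⟩ := Group.IsSolvable.solvable (G := ↥N)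
    rw [hder n] at hn
    haveI : Nontrivial ↥N := (Subgroup.nontrivial_iff_ne_bot N).mpr hbot
    obtain ⟨x, y, hxy⟩ := exists_pair_ne ↥N
    apply hxy
    have hx : x ∈ (⊥ : Subgroup ↥N) := hn ▸ Subgroup.mem_top x
    have hy : y ∈ (⊥ : Subgroup ↥N) := hn ▸ Subgroup.mem_top y
    rw [Subgroup.mem_bot] at hx hy
    rw [hx, hy]

/-- Conjugating one Sylow subgroup to another inside a subgroup containing both. -/
lemma sylow_conj_of_le {p : ℕ} [Fact p.Prime] [Finite G] (P Q : Sylow p G)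
    (K : Subgroup G) (hP : ↑P ≤ K) (hQ : ↑Q ≤ K) :
    ∃ k : G, k ∈ K ∧ ∀ x : G, x ∈ (Q : Subgroup G) ↔ k⁻¹ * x * k ∈ (P : Subgroup G) := by
  obtain ⟨k, hk⟩ := MulAction.exists_smul_eq ↥K (P.subtype hP) (Q.subtype hQ)
  refine ⟨(k : G), k.2, fun x => ?_⟩
  constructor
  · intro hx
    have hxK : x ∈ K := hQ hx
    have hmem : (⟨x, hxK⟩ : ↥K) ∈ (Q.subtype hQ : Subgroup ↥K) := by
      rw [Sylow.coe_subtype, Subgroup.mem_subgroupOf]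
      exact hx
    rw [← hk, Sylow.smul_def, Sylow.pointwise_smul_def,
      Subgroup.mem_pointwise_smul_iff_inv_smul_mem] at hmem
    rw [Sylow.coe_subtype, Subgroup.mem_subgroupOf] at hmem
    have : (((MulAut.conj k)⁻¹ • (⟨x, hxK⟩ : ↥K) : ↥K) : G) = k⁻¹ * x * k := by
      rw [← map_inv, MulAut.smul_def, MulAut.conj_apply]
      push_cast
      group
    rw [this] at hmem
    exact hmem
  · intro hx
    have hxK : x ∈ K := by
      have h1 : k⁻¹ * x * k ∈ K := hP hx
      have := K.mul_mem (K.mul_mem k.2 h1) (K.inv_mem k.2)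
      simpa [mul_assoc] using this
    have hmem : ((MulAut.conj k)⁻¹ • (⟨x, hxK⟩ : ↥K) : ↥K) ∈ (P.subtype hP : Subgroup ↥K) := by
      rw [Sylow.coe_subtype, Subgroup.mem_subgroupOf]
      have : (((MulAut.conj k)⁻¹ • (⟨x, hxK⟩ : ↥K) : ↥K) : G) = k⁻¹ * x * k := by
        rw [← map_inv, MulAut.smul_def, MulAut.conj_apply]
        push_cast
        group
      rw [this]
      exact hx
    rw [← Subgroup.mem_pointwise_smul_iff_inv_smul_mem, ← Sylow.pointwise_smul_def,
      ← Sylow.smul_def, hk, Sylow.coe_subtype, Subgroup.mem_subgroupOf] at hmem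
    exact hmem

/-- A subgroup of index not divisible by `p` contains a Sylow `p`-subgroup. -/
lemma sylow_le_of_not_dvd_index {p : ℕ} [Fact p.Prime] [Finite G] (T : Subgroup G)
    (h : ¬ p ∣ T.index) : ∃ S : Sylow p G, ↑S ≤ T := by
  obtain ⟨P₀⟩ := Sylow.nonempty (p := p) (G := ↥T)
  have hpS : IsPGroup p (Subgroup.map T.subtype ↑P₀) := P₀.2.map _
  have hidx : ¬ p ∣ (Subgroup.map T.subtype ↑P₀).index := by
    rw [Subgroup.index_map_subtype]
    exact Nat.Prime.not_dvd_mul Fact.out P₀.not_dvd_index h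
  exact ⟨hpS.toSylow hidx, Subgroup.map_subtype_le _⟩

end GroupHelpers
open scoped Pointwise

theorem pang_lu_aux (p : ℕ) [Fact p.Prime] :
    ∀ (n : ℕ) (G : Type) [Group G] [Finite G] [Group.IsSolvable G], Nat.card G ≤ n →
    (∀ (H : Subgroup G) (lam : H →* ℂˣ),
      IsSimpleModule (MonoidAlgebra ℂ G) (indRep ℂ H lam).asModule →
        ¬ (p ∣ Module.finrank ℂ (IndSpace ℂ H lam))) →
    ∃ P : Sylow p G, (P : Subgroup G).Normal := by
  intro n
  induction n with
  | zero =>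
    intro G _ _ _ hcard _
    have := Nat.card_pos (α := G)
    omega
  | succ n ih =>
    intro G _ _ _ hcard hmono
    by_cases hG : Subsingleton G
    · obtain ⟨P⟩ := Sylow.nonempty (p := p) (G := G)
      exact ⟨P, ⟨fun a ha g => by rwa [Subsingleton.elim (g * a * g⁻¹) a]⟩⟩
    haveI : Nontrivial G := not_subsingleton_iff_nontrivial.mp hG
    obtain ⟨N, hNnorm, hNbot, hNmin⟩ := exists_minimal_normal (G := G)
    haveI := hNnorm
    have hNab : ∀ a b : G, a ∈ N → b ∈ N → a * b = b * a :=
      minimal_normal_comm N hNnorm hNbot hNmin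
    have hcardq : Nat.card (G ⧸ N) ≤ n := by
      have h1 := Subgroup.card_eq_card_quotient_mul_card_subgroup N
      have h2 : 1 < Nat.card ↥N :=
        Finite.one_lt_card_iff_nontrivial.mpr ((Subgroup.nontrivial_iff_ne_bot N).mpr hNbot)
      have h3 : 0 < Nat.card (G ⧸ N) := Nat.card_pos
      have h4 : Nat.card (G ⧸ N) * 2 ≤ Nat.card (G ⧸ N) * Nat.card ↥N :=
        Nat.mul_le_mul_left _ h2
      omega
    obtain ⟨Qb, hQbnorm⟩ := ih (G ⧸ N) hcardq (hmono_quotient N p hmono)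
    obtain ⟨P⟩ := Sylow.nonempty (p := p) (G := G)
    haveI := hQbnorm
    have hmapAll : ∀ Q : Sylow p G,
        Subgroup.map (QuotientGroup.mk' N) ↑Q = ↑Qb := by
      intro Q
      obtain ⟨g, hg⟩ := MulAction.exists_smul_eq (G ⧸ N) Qb
        (Q.mapSurjective (QuotientGroup.mk'_surjective N))
      rw [Sylow.smul_eq_of_normal] at hg
      rw [hg]
      exact (Sylow.coe_mapSurjective (QuotientGroup.mk'_surjective N) Q).symm
    set K := Subgroup.comap (QuotientGroup.mk' N) (↑Qb : Subgroup (G ⧸ N)) with hKdef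
    haveI hKnorm : K.Normal := Subgroup.Normal.comap hQbnorm _
    have hallK : ∀ Q : Sylow p G, (Q : Subgroup G) ≤ K := by
      intro Q x hx
      rw [hKdef, Subgroup.mem_comap, ← hmapAll Q]
      exact Subgroup.mem_map_of_mem _ hx
    have hPK := hallK P
    have hKPN : K = (↑P : Subgroup G) ⊔ N := by
      rw [hKdef, ← hmapAll P, Subgroup.comap_map_eq, QuotientGroup.ker_mk']
    have hKdec : ∀ k ∈ K, ∃ a ∈ N, ∃ x ∈ (P : Subgroup G), a * x = k := by
      intro k hk
      rw [hKPN, sup_comm, ← SetLike.mem_coe, Subgroup.normal_mul] at hk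
      exact Set.mem_mul.mp hk
    by_cases hfrat : ∀ M : Subgroup G, IsCoatom M → N ≤ M
    · -- Frattini-type argument
      refine ⟨P, ?_⟩
      rw [← Subgroup.normalizer_eq_top_iff]
      by_contra hne
      obtain ⟨M, hM, hle⟩ :=
        (eq_top_or_exists_le_coatom (Subgroup.normalizer ((P : Subgroup G) : Set G))).resolve_left hne
      have hfr : Subgroup.normalizer ((P : Subgroup G) : Set G) ⊔ K = ⊤ :=
        Sylow.normalizer_sup_eq_top' (N := K) P hPK
      have hsub : Subgroup.normalizer ((↑P : Subgroup G) : Set G) ⊔ K ≤ M := by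
        rw [hKPN]
        exact sup_le hle (sup_le (Subgroup.le_normalizer.trans hle) (hfrat M hM))
      rw [hfr] at hsub
      exact hM.1 (top_le_iff.mp hsub)
    · push_neg at hfrat
      obtain ⟨M, hM, hNM⟩ := hfrat
      have hsup : N ⊔ M = ⊤ := by
        have := hM.2 (M ⊔ N) (lt_of_le_of_ne le_sup_left (fun h => hNM (h ▸ le_sup_right)))
        rw [sup_comm] at this
        exact this
      have hdisj : N ⊓ M = ⊥ := by
        by_contra hD
        have hDnorm : (N ⊓ M).Normal := by
          constructor
          intro d hd g
          have hgmem : g ∈ ((N : Set G) * (M : Set G)) := by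
            rw [← Subgroup.normal_mul, hsup]
            trivial
          obtain ⟨a, haN, b, hbM, hab⟩ := Set.mem_mul.mp hgmem
          have h1 : b * d * b⁻¹ ∈ N ⊓ M :=
            ⟨hNnorm.conj_mem d hd.1 b, M.mul_mem (M.mul_mem hbM hd.2) (M.inv_mem hbM)⟩
          have h2 : g * d * g⁻¹ = a * (b * d * b⁻¹) * a⁻¹ := by rw [← hab]; group
          have h3 : a * (b * d * b⁻¹) * a⁻¹ = b * d * b⁻¹ := by
            rw [hNab a (b * d * b⁻¹) haN h1.1]
            group
          rw [h2, h3]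
          exact h1
        have := hNmin (N ⊓ M) hDnorm hD inf_le_left
        exact hNM (this ▸ inf_le_right)
      by_cases hcent : ∀ x ∈ (P : Subgroup G), ∀ a ∈ N, x * a = a * x
      · -- P is centralized by N, hence normal
        refine ⟨P, ?_⟩
        rw [← Subgroup.normalizer_eq_top_iff, Subgroup.eq_top_iff']
        intro g
        refine Sylow.smul_eq_iff_mem_normalizer.mp ?_
        obtain ⟨k, hkK, hconj⟩ := sylow_conj_of_le P (g • P) K hPK (hallK _)
        obtain ⟨a, haN, x₀, hx₀, hk⟩ := hKdec k hkK
        apply Sylow.ext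
        apply Subgroup.ext
        intro z
        rw [show (z ∈ ((g • P : Sylow p G) : Subgroup G)) ↔ k⁻¹ * z * k ∈ (P : Subgroup G)
          from hconj z]
        constructor
        · intro hw
          have hu : x₀ * (k⁻¹ * z * k) * x₀⁻¹ ∈ (P : Subgroup G) :=
            P.1.mul_mem (P.1.mul_mem hx₀ hw) (P.1.inv_mem hx₀)
          have hzEq : z = a * (x₀ * (k⁻¹ * z * k) * x₀⁻¹) * a⁻¹ := by rw [← hk]; group
          have hconj2 : a * (x₀ * (k⁻¹ * z * k) * x₀⁻¹) * a⁻¹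
              = x₀ * (k⁻¹ * z * k) * x₀⁻¹ := by
            rw [← hcent _ hu a haN]
            group
          rw [hzEq, hconj2]
          exact hu
        · intro hz
          have h6 : a⁻¹ * z * a = z := by
            rw [show a⁻¹ * z * a = a⁻¹ * (z * a) from by group, hcent z hz a haN]
            group
          have h5 : k⁻¹ * z * k = x₀⁻¹ * (a⁻¹ * z * a) * x₀ := by rw [← hk]; group
          rw [h5, h6]
          exact P.1.mul_mem (P.1.mul_mem (P.1.inv_mem hx₀) hz) hx₀
      · -- the character-theoretic contradiction
        exfalso
        push_neg at hcent
        obtain ⟨x, hxP, a, haN, hxa⟩ := hcent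
        letI : CommGroup ↥N :=
          { (inferInstance : Group ↥N) with
            mul_comm := fun u v => Subtype.ext (hNab u v u.2 v.2) }
        haveI : NeZero (Monoid.exponent ↥N) := ⟨Monoid.exponent_ne_zero_of_finite⟩
        have hbmem : x * a * x⁻¹ * a⁻¹ ∈ N :=
          N.mul_mem (hNnorm.conj_mem a haN x) (N.inv_mem haN)
        have hb1 : (⟨x * a * x⁻¹ * a⁻¹, hbmem⟩ : ↥N) ≠ 1 := by
          intro h
          apply hxa
          have h0 : x * a * x⁻¹ * a⁻¹ = 1 := congrArg Subtype.val h
          have h4 : x * a * x⁻¹ = a := by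
            have := mul_eq_one_iff_eq_inv.mp h0
            simpa using this
          calc x * a = (x * a * x⁻¹) * x := by group
            _ = a * x := by rw [h4]
        obtain ⟨ν, hν⟩ := CommGroup.exists_apply_ne_one_of_hasEnoughRootsOfUnity ↥N ℂ hb1
        have hνx : ν (MulAut.conjNormal x ⟨a, haN⟩) ≠ ν ⟨a, haN⟩ := by
          intro h
          apply hν
          have hsplit : (⟨x * a * x⁻¹ * a⁻¹, hbmem⟩ : ↥N)
              = MulAut.conjNormal x ⟨a, haN⟩ * (⟨a, haN⟩ : ↥N)⁻¹ := by
            apply Subtype.ext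
            rw [Subgroup.coe_mul, MulAut.conjNormal_apply]
            rfl
          rw [hsplit, map_mul, map_inv, h]
          simp
        -- the stabilizer subgroup of ν
        set T : Subgroup G :=
          { carrier := {g : G | ∀ m : ↥N, ν (MulAut.conjNormal g m) = ν m}
            one_mem' := by
              intro m
              simp
            mul_mem' := by
              intro g h hg hh m
              rw [map_mul, MulAut.mul_apply, hg, hh]
            inv_mem' := by
              intro g hg m
              have h1 := hg ((MulAut.conjNormal g⁻¹) m)
              have h2 : (MulAut.conjNormal g) ((MulAut.conjNormal g⁻¹) m) = m := by
                rw [← MulAut.mul_apply, ← map_mul]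
                simp
              rw [h2] at h1
              exact h1.symm } with hTdef
        have hstab : ∀ g : G, g ∈ T ↔ ∀ m : ↥N, ν (MulAut.conjNormal g m) = ν m :=
          fun g => Iff.rfl
        have hNT : N ≤ T := by
          intro u hu
          rw [hstab]
          intro mm
          have h1 : (MulAut.conjNormal u) mm = mm := by
            apply Subtype.ext
            rw [MulAut.conjNormal_apply]
            rw [hNab u mm hu mm.2]
            group
          rw [h1]
        -- p divides the index of T
        have hdvdT : p ∣ T.index := by
          by_contra hnd
          obtain ⟨S, hST⟩ := sylow_le_of_not_dvd_index T hnd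
          obtain ⟨k, hkK, hconj⟩ := sylow_conj_of_le P S K hPK (hallK S)
          obtain ⟨a₀, ha₀, x₀, hx₀, hk⟩ := hKdec k hkK
          have hzS : a₀ * x * a₀⁻¹ ∈ (S : Subgroup G) := by
            rw [hconj]
            rw [show k⁻¹ * (a₀ * x * a₀⁻¹) * k = x₀⁻¹ * x * x₀ from by rw [← hk]; group]
            exact P.1.mul_mem (P.1.mul_mem (P.1.inv_mem hx₀) hxP) hx₀
          have hzT : a₀ * x * a₀⁻¹ ∈ T := hST hzS
          apply hνx
          have key := (hstab _).mp hzT ⟨a, haN⟩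
          have heq : (MulAut.conjNormal (a₀ * x * a₀⁻¹)) (⟨a, haN⟩ : ↥N)
              = (MulAut.conjNormal x) ⟨a, haN⟩ := by
            apply Subtype.ext
            rw [MulAut.conjNormal_apply, MulAut.conjNormal_apply]
            have h1 : a₀⁻¹ * a * a₀ = a := by
              rw [mul_assoc, hNab a a₀ haN ha₀]
              group
            have h2 : x * a * x⁻¹ ∈ N := hNnorm.conj_mem a haN x
            have h3 : a₀ * (x * a * x⁻¹) * a₀⁻¹ = x * a * x⁻¹ := by
              rw [hNab a₀ (x * a * x⁻¹) ha₀ h2]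
              group
            calc (a₀ * x * a₀⁻¹) * a * (a₀ * x * a₀⁻¹)⁻¹
                = a₀ * (x * (a₀⁻¹ * a * a₀) * x⁻¹) * a₀⁻¹ := by group
              _ = a₀ * (x * a * x⁻¹) * a₀⁻¹ := by rw [h1]
              _ = x * a * x⁻¹ := h3
          rw [heq] at key
          exact key
        -- decomposition G = N * M and the linear character lam of T
        have hdec : ∀ g : G, ∃ ab : G × G, ab.1 ∈ N ∧ ab.2 ∈ M ∧ g = ab.1 * ab.2 := by
          intro g
          have hg : g ∈ ((N : Set G) * (M : Set G)) := by
            rw [← Subgroup.normal_mul, hsup]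
            trivial
          obtain ⟨u, hu, v, hv, huv⟩ := Set.mem_mul.mp hg
          exact ⟨(u, v), hu, hv, huv.symm⟩
        have huniq : ∀ a₁ b₁ a₂ b₂ : G, a₁ ∈ N → b₁ ∈ M → a₂ ∈ N → b₂ ∈ M →
            a₁ * b₁ = a₂ * b₂ → a₁ = a₂ := by
          intro a₁ b₁ a₂ b₂ h1 h2 h3 h4 heq
          have h5 : a₂⁻¹ * a₁ ∈ N ⊓ M := by
            constructor
            · exact N.mul_mem (N.inv_mem h3) h1
            · have h6 : a₂⁻¹ * a₁ = b₂ * b₁⁻¹ := by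
                rw [show a₂⁻¹ * a₁ = a₂⁻¹ * (a₁ * b₁) * b₁⁻¹ from by group, heq]
                group
              rw [h6]
              exact M.mul_mem h4 (M.inv_mem h2)
          rw [hdisj] at h5
          exact (inv_mul_eq_one.mp (Subgroup.mem_bot.mp h5)).symm
        classical
        choose dec hdecN hdecM hdecEq using hdec
        have hNpart : ∀ (u v : G), u ∈ N → v ∈ M → (dec (u * v)).1 = u := by
          intro u v hu hv
          exact huniq _ _ _ _ (hdecN (u * v)) (hdecM (u * v)) hu hv (hdecEq (u * v)).symm
        set lam : ↥T →* ℂˣ :=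
          { toFun := fun t => ν ⟨(dec (t : G)).1, hdecN _⟩
            map_one' := by
              show ν ⟨(dec (((1 : ↥T) : G))).1, hdecN _⟩ = 1
              have h1 : (dec ((1 : G) * 1)).1 = 1 := hNpart 1 1 N.one_mem M.one_mem
              rw [mul_one] at h1
              have h2 : (⟨(dec (((1 : ↥T) : G))).1, hdecN _⟩ : ↥N) = 1 :=
                Subtype.ext (by simpa using h1)
              rw [h2, map_one]
            map_mul' := by
              intro t₁ t₂
              show ν ⟨(dec ((t₁ * t₂ : ↥T) : G)).1, hdecN _⟩
                  = ν ⟨(dec ((t₁ : ↥T) : G)).1, hdecN _⟩ * ν ⟨(dec ((t₂ : ↥T) : G)).1, hdecN _⟩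
              obtain ⟨a₁, b₁, ha₁, hb₁, hA₁, hE1⟩ :
                  ∃ a b : G, a ∈ N ∧ b ∈ M ∧ (dec ((t₁ : ↥T) : G)).1 = a ∧ ((t₁ : ↥T) : G) = a * b :=
                ⟨_, _, hdecN _, hdecM _, rfl, hdecEq _⟩
              obtain ⟨a₂, b₂, ha₂, hb₂, hA₂, hE2⟩ :
                  ∃ a b : G, a ∈ N ∧ b ∈ M ∧ (dec ((t₂ : ↥T) : G)).1 = a ∧ ((t₂ : ↥T) : G) = a * b :=
                ⟨_, _, hdecN _, hdecM _, rfl, hdecEq _⟩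
              have hconjmem : b₁ * a₂ * b₁⁻¹ ∈ N := hNnorm.conj_mem a₂ ha₂ b₁
              have haprod : a₁ * (b₁ * a₂ * b₁⁻¹) ∈ N := N.mul_mem ha₁ hconjmem
              have hbprod : b₁ * b₂ ∈ M := M.mul_mem hb₁ hb₂
              have hprod : ((t₁ * t₂ : ↥T) : G)
                  = (a₁ * (b₁ * a₂ * b₁⁻¹)) * (b₁ * b₂) := by
                rw [Subgroup.coe_mul, hE1, hE2]
                group
              have hdec12 : (dec ((t₁ * t₂ : ↥T) : G)).1 = a₁ * (b₁ * a₂ * b₁⁻¹) := by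
                rw [hprod]
                exact hNpart _ _ haprod hbprod
              have hb₁T : b₁ ∈ T := by
                have hq : b₁ = a₁⁻¹ * ((t₁ : ↥T) : G) := by rw [hE1]; group
                rw [hq]
                exact T.mul_mem (T.inv_mem (hNT ha₁)) t₁.2
              have hν2 : ν ⟨b₁ * a₂ * b₁⁻¹, hconjmem⟩ = ν ⟨a₂, ha₂⟩ := by
                have h7 := (hstab b₁).mp hb₁T ⟨a₂, ha₂⟩
                have h8 : (MulAut.conjNormal b₁) (⟨a₂, ha₂⟩ : ↥N)
                    = ⟨b₁ * a₂ * b₁⁻¹, hconjmem⟩ := by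
                  apply Subtype.ext
                  rw [MulAut.conjNormal_apply]
                rw [← h8]
                exact h7
              have h9 : (⟨(dec ((t₁ * t₂ : ↥T) : G)).1, hdecN _⟩ : ↥N)
                  = ⟨a₁, ha₁⟩ * ⟨b₁ * a₂ * b₁⁻¹, hconjmem⟩ := by
                apply Subtype.ext
                show (dec ((t₁ * t₂ : ↥T) : G)).1 = a₁ * (b₁ * a₂ * b₁⁻¹)
                exact hdec12
              have e₁ : (⟨(dec ((t₁ : ↥T) : G)).1, hdecN _⟩ : ↥N) = ⟨a₁, ha₁⟩ :=
                Subtype.ext hA₁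
              have e₂ : (⟨(dec ((t₂ : ↥T) : G)).1, hdecN _⟩ : ↥N) = ⟨a₂, ha₂⟩ :=
                Subtype.ext hA₂
              rw [h9, e₁, e₂, map_mul, hν2] } with hlamdef
        have hres : ∀ m : ↥N, lam ⟨(m : G), hNT m.2⟩ = ν m := by
          intro m
          have h1 : (dec ((m : G) * 1)).1 = (m : G) := hNpart _ _ m.2 M.one_mem
          rw [mul_one] at h1
          show ν ⟨(dec (((⟨(m : G), hNT m.2⟩ : ↥T) : G))).1, hdecN _⟩ = ν m
          have h2 : (⟨(dec (((⟨(m : G), hNT m.2⟩ : ↥T) : G))).1, hdecN _⟩ : ↥N) = m :=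
            Subtype.ext (by simpa using h1)
          rw [h2]
        have hsimple := isSimpleModule_indRep_of_stab N ν T lam hNT hres hstab
        have hfr := finrank_indSpace T lam
        exact (hmono T lam hsimple) (hfr ▸ hdvdT)

/-- **Pang–Lu, Theorem 1.3.**  Let `G` be a finite solvable group and `p` a prime.  If every
monomial irreducible ordinary (complex) character of `G` — i.e. every irreducible character
induced from a linear character `lam` of a subgroup `H`, modelled here by the induced
representation being irreducible — has degree not divisible by `p`, then `G` has a normal
Sylow `p`-subgroup. -/
theorem pang_lu_monomial_ordinary (p : ℕ) [Fact p.Prime] (G : Type) [Group G] [Finite G]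
    [Group.IsSolvable G]
    (hmono : ∀ (H : Subgroup G) (lam : H →* ℂˣ),
      IsSimpleModule (MonoidAlgebra ℂ G) (indRep ℂ H lam).asModule →
        ¬ (p ∣ Module.finrank ℂ (IndSpace ℂ H lam))) :
    ∃ P : Sylow p G, (P : Subgroup G).Normal := by
  exact pang_lu_aux p (Nat.card G) G le_rfl hmono
end

section
/- Let G be a finite group, N an abelian normal subgroup complemented in G, λ a linear character of N, and T the inertia group of λ in G. Then λ extends to a linear character ν of T. -/
/-- Let `G` be a finite group, `N` an abelian normal subgroup complemented in `G`,
`lam` a linear character of `N`, and `T` the inertia group of `lam` in `G`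
(so `N ≤ T` and `g ∈ T` iff `lam` is fixed by conjugation by `g`).  Then `lam` extends to a
linear character `ν` of `T`. -/
theorem linear_character_extends_to_inertia (G : Type) [Group G] [Finite G]
    (N : Subgroup G) (hN : N.Normal) (hab : ∀ a ∈ N, ∀ b ∈ N, a * b = b * a)
    (hcompl : ∃ H : Subgroup G, N.IsComplement' H)
    (lam : N →* ℂˣ) (T : Subgroup G) (hNT : N ≤ T)
    (hT : ∀ g : G, g ∈ T ↔ ∀ n : N,
      lam ⟨g * (n : G) * g⁻¹, hN.conj_mem n n.2 g⟩ = lam n) :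
    ∃ ν : T →* ℂˣ, ∀ n : N, ν ⟨(n : G), hNT n.2⟩ = lam n := by
  obtain ⟨H, hc⟩ := hcompl
  -- projection to N
  set π : G → N := fun g => ⟨((hc.equiv g).1 : G), (hc.equiv g).1.2⟩ with hπ
  have hfst : ∀ (n : G) (hn : n ∈ N) (h : G) (hh : h ∈ H), π (n * h) = ⟨n, hn⟩ := by
    intro n hn h hh
    have h1 := hc.equiv_mul_left_of_mem (g := h) hn
    have h2 := hc.equiv_fst_eq_one_of_mem_of_one_mem (one_mem _) hh
    simp only [hπ, h1, h2]
    ext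
    simp
  have hdecomp : ∀ g : G, g = (π g : G) * ((hc.equiv g).2 : G) := by
    intro g
    exact (hc.equiv_fst_mul_equiv_snd g).symm
  have hsnd_mem : ∀ g : G, ((hc.equiv g).2 : G) ∈ H := fun g => (hc.equiv g).2.2
  -- snd of an element of T is in T
  have hsndT : ∀ g : G, g ∈ T → ((hc.equiv g).2 : G) ∈ T := by
    intro g hg
    rw [hc.equiv_snd_eq_inv_mul]
    exact T.mul_mem (T.inv_mem (hNT (π g).2)) hg
  have key : ∀ g g' : G, g ∈ T → π (g * g') = π g * ⟨((hc.equiv g).2 : G) * (π g' : G) * ((hc.equiv g).2 : G)⁻¹, hN.conj_mem _ (π g').2 _⟩ := by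
    intro g g' hg
    have e : g * g' = ((π g : G) * (((hc.equiv g).2 : G) * (π g' : G) * ((hc.equiv g).2 : G)⁻¹)) * (((hc.equiv g).2 : G) * ((hc.equiv g').2 : G)) := by
      conv_lhs => rw [hdecomp g, hdecomp g']
      group
    rw [e, hfst _ (N.mul_mem (π g).2 (hN.conj_mem _ (π g').2 _)) _ (H.mul_mem (hsnd_mem g) (hsnd_mem g'))]
    ext
    simp
  refine ⟨{ toFun := fun t => lam (π (t : G))
            map_one' := ?_
            map_mul' := ?_ }, ?_⟩
  · show lam (π ((1 : T) : G)) = 1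
    have h1 : ((1 : T) : G) = (1 : G) := rfl
    have : π (1 : G) = 1 := by
      have := hfst 1 (N.one_mem) 1 (H.one_mem)
      rw [mul_one] at this
      exact this
    rw [h1, this, map_one]
  · intro t t'
    show lam (π ((t * t' : T) : G)) = lam (π (t : G)) * lam (π (t' : G))
    have h1 : ((t * t' : T) : G) = (t : G) * (t' : G) := rfl
    rw [h1, key (t : G) (t' : G) t.2, map_mul]
    congr 1
    have := (hT _).mp (hsndT (t : G) t.2) (π (t' : G))
    exact this
  · intro n
    show lam (π ((n : G))) = lam n
    have := hfst (n : G) n.2 1 (H.one_mem)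
    rw [mul_one] at this
    rw [this]
end
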